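/- If a linear trace-preserving positive map Φ on the space of finite-rank Hermitian operators restricts to a bijection of the set of pure states onto itself, then Φ preserves the rank of every finite-rank density state: rank(Φ(ρ)) = rank(ρ). -/

import Mathlib

open scoped ComplexOrder

/-- A pure state: a rank-one orthogonal projection. -/
def IsPureState {n : ℕ} (ρ : Matrix (Fin n) (Fin n) ℂ) : Prop :=
  ρ.IsHermitian ∧ ρ * ρ = ρ ∧ ρ.trace = 1

/-- A density state: a positive semidefinite operator of trace 1. -/
def IsDensityState {n : ℕ} (ρ : Matrix (Fin n) (Fin n) ℂ) : Prop :=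
  ρ.PosSemidef ∧ ρ.trace = 1

section Aux

open Matrix

variable {m : ℕ}

lemma aux_rank_add_le (A B : Matrix (Fin m) (Fin m) ℂ) :
    (A + B).rank ≤ A.rank + B.rank := by
  have h : LinearMap.range (A + B).mulVecLin ≤
      LinearMap.range A.mulVecLin ⊔ LinearMap.range B.mulVecLin := by
    rintro x ⟨v, rfl⟩
    rw [Matrix.mulVecLin_add]
    exact Submodule.add_mem_sup ⟨v, rfl⟩ ⟨v, rfl⟩
  calc (A+B).rank
      ≤ Module.finrank ℂ ↥(LinearMap.range A.mulVecLin ⊔ LinearMap.range B.mulVecLin) :=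
        Submodule.finrank_mono h
    _ ≤ A.rank + B.rank := by
        have := Submodule.finrank_sup_add_finrank_inf_eq
          (LinearMap.range A.mulVecLin) (LinearMap.range B.mulVecLin)
        unfold Matrix.rank
        omega

lemma aux_rank_finset_sum_le {ι : Type*} (s : Finset ι) (f : ι → Matrix (Fin m) (Fin m) ℂ) :
    (∑ i ∈ s, f i).rank ≤ ∑ i ∈ s, (f i).rank := by
  classical
  induction s using Finset.cons_induction with
  | empty => simp [Matrix.rank_zero]
  | cons a s ha ih =>
    rw [Finset.sum_cons, Finset.sum_cons]
    exact le_trans (aux_rank_add_le _ _) (add_le_add (le_refl _) ih)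

lemma aux_rank_real_smul_le (c : ℝ) (M : Matrix (Fin m) (Fin m) ℂ) :
    (c • M).rank ≤ M.rank := by
  apply Submodule.finrank_mono
  rintro x ⟨v, rfl⟩
  refine ⟨(c : ℂ) • v, ?_⟩
  simp only [Matrix.mulVecLin_apply, Matrix.mulVec_smul, Matrix.smul_mulVec]
  ext j
  simp [Complex.real_smul]

lemma aux_rank_sum_smul_le (lam : Fin m → ℝ) (Q : Fin m → Matrix (Fin m) (Fin m) ℂ)
    (hQ : ∀ i, (Q i).rank ≤ 1) :
    (∑ i, lam i • Q i).rank ≤ (Finset.univ.filter fun i => lam i ≠ 0).card := by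
  classical
  have hsum : ∑ i, lam i • Q i
      = ∑ i ∈ Finset.univ.filter (fun i => lam i ≠ 0), lam i • Q i := by
    symm
    apply Finset.sum_filter_of_ne
    intro i _ h hlam
    exact h (by rw [hlam, zero_smul])
  rw [hsum]
  calc (∑ i ∈ Finset.univ.filter (fun i => lam i ≠ 0), lam i • Q i).rank
      ≤ ∑ i ∈ Finset.univ.filter (fun i => lam i ≠ 0), (lam i • Q i).rank :=
        aux_rank_finset_sum_le _ _
    _ ≤ ∑ _i ∈ Finset.univ.filter (fun i => lam i ≠ 0), 1 := by
        apply Finset.sum_le_sum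
        intro i _
        exact le_trans (aux_rank_real_smul_le _ _) (hQ i)
    _ = (Finset.univ.filter fun i => lam i ≠ 0).card := by simp

lemma aux_herm_decomp {A : Matrix (Fin m) (Fin m) ℂ} (hA : A.IsHermitian) :
    ∃ (lam : Fin m → ℝ) (P : Fin m → Matrix (Fin m) (Fin m) ℂ),
      (∀ i, IsPureState (P i)) ∧ A = ∑ i, lam i • P i ∧
      A.rank = (Finset.univ.filter fun i => lam i ≠ 0).card := by
  set v : Fin m → Fin m → ℂ := fun i => ⇑(hA.eigenvectorBasis i) with hv
  have hnorm : ∀ i, ∑ c, (starRingEnd ℂ) (v i c) * v i c = 1 := by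
    intro i
    have h1 : (‖hA.eigenvectorBasis i‖ : ℂ) = 1 := by
      rw [hA.eigenvectorBasis.orthonormal.1 i]; norm_num
    have h2 := inner_self_eq_norm_sq_to_K (𝕜 := ℂ) (hA.eigenvectorBasis i)
    rw [PiLp.inner_apply] at h2
    rw [hv]; simpa [h1, Complex.conj_mul'] using h2
  refine ⟨hA.eigenvalues,
    fun i => Matrix.vecMulVec (v i) (star (v i)), ?_, ?_, ?_⟩
  · intro i
    refine ⟨?_, ?_, ?_⟩
    · ext a b
      simp [Matrix.vecMulVec_apply, conjTranspose_apply, mul_comm]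
    · ext a b
      simp only [Matrix.mul_apply, Matrix.vecMulVec_apply, Pi.star_apply]
      calc ∑ c, v i a * star (v i c) * (v i c * star (v i b))
          = (∑ c, (starRingEnd ℂ) (v i c) * v i c) * (v i a * star (v i b)) := by
            rw [Finset.sum_mul]; apply Finset.sum_congr rfl; intro c _
            simp only [RCLike.star_def]; ring
        _ = v i a * star (v i b) := by rw [hnorm i, one_mul]
    · simp only [Matrix.trace, Matrix.diag, Matrix.vecMulVec_apply, Pi.star_apply]
      rw [← hnorm i]
      apply Finset.sum_congr rfl; intro c _
      simp only [RCLike.star_def]; ring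
  · nth_rewrite 1 [hA.spectral_theorem]
    ext a b
    simp only [Unitary.conjStarAlgAut_apply, Unitary.coe_star, Matrix.mul_apply, Matrix.diagonal_apply, Function.comp_apply,
      Matrix.sum_apply, Pi.smul_apply, Matrix.vecMulVec_apply, Pi.star_apply,
      Matrix.star_apply, hA.eigenvectorUnitary_apply, Matrix.smul_apply, mul_ite, mul_zero,
      Finset.sum_ite_eq', Finset.mem_univ, if_true, smul_eq_mul]
    apply Finset.sum_congr rfl
    intro i _
    simp only [Complex.real_smul, RCLike.star_def, Complex.coe_algebraMap, RCLike.ofReal_alg, hv]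
    ring
  · rw [hA.rank_eq_card_non_zero_eigs]
    simp [Fintype.card_subtype]

lemma aux_pure_rank {ρ : Matrix (Fin m) (Fin m) ℂ} (h : IsPureState ρ) : ρ.rank = 1 := by
  obtain ⟨hH, hid, htr⟩ := h
  have heig : ∀ i, hH.eigenvalues i = 0 ∨ hH.eigenvalues i = 1 := by
    intro i
    have hvv := hH.mulVec_eigenvectorBasis i
    have h2 : (ρ * ρ) *ᵥ ⇑(hH.eigenvectorBasis i)
        = (hH.eigenvalues i * hH.eigenvalues i) • ⇑(hH.eigenvectorBasis i) := by
      rw [← Matrix.mulVec_mulVec, hvv, Matrix.mulVec_smul, hvv, smul_smul]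
    rw [hid, hvv] at h2
    have hne : ⇑(hH.eigenvectorBasis i) ≠ 0 := by
      intro hc
      have h0 : hH.eigenvectorBasis i = 0 := PiLp.ext (fun j => congrFun hc j)
      have hn := hH.eigenvectorBasis.orthonormal.1 i
      rw [h0, norm_zero] at hn
      norm_num at hn
    have heq : hH.eigenvalues i * hH.eigenvalues i = hH.eigenvalues i :=
      smul_left_injective ℝ hne h2.symm
    have h3 : hH.eigenvalues i * (hH.eigenvalues i - 1) = 0 := by nlinarith [heq]
    rcases mul_eq_zero.mp h3 with h | h
    · exact Or.inl h
    · exact Or.inr (by linarith)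
  have htr2 : ∑ i, hH.eigenvalues i = 1 := by
    have hd : ρ.trace
        = (Matrix.diagonal (RCLike.ofReal ∘ hH.eigenvalues) : Matrix (Fin m) (Fin m) ℂ).trace := by
      nth_rewrite 1 [hH.spectral_theorem]
      rw [Unitary.conjStarAlgAut_apply, Matrix.trace_mul_cycle]
      congr 1
      have h1 := (Matrix.mem_unitaryGroup_iff').mp (hH.eigenvectorUnitary).2
      rw [h1, Matrix.one_mul]
    rw [htr, Matrix.trace_diagonal] at hd
    have : ((∑ i, hH.eigenvalues i : ℝ) : ℂ) = 1 := by
      push_cast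
      rw [hd]
      simp
    exact_mod_cast this
  have hcard : (Finset.univ.filter fun i => hH.eigenvalues i ≠ 0).card = 1 := by
    have hs : ∑ i, hH.eigenvalues i
        = ∑ i ∈ Finset.univ.filter (fun i => hH.eigenvalues i ≠ 0), 1 := by
      rw [Finset.sum_filter]
      apply Finset.sum_congr rfl
      intro i _
      rcases heig i with h | h <;> simp [h]
    rw [htr2, Finset.sum_const, nsmul_eq_mul, mul_one] at hs
    exact_mod_cast hs.symm
  rw [hH.rank_eq_card_non_zero_eigs, Fintype.card_subtype]
  exact hcard

end Aux

/-- A linear trace-preserving positive map Φ on Hermitian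
operators which restricts to a bijection of the set of pure states onto itself
preserves the rank of every density state. -/
theorem stmt_9 (n : ℕ) (hn : 0 < n)
    (Φ : Matrix (Fin n) (Fin n) ℂ →ₗ[ℝ] Matrix (Fin n) (Fin n) ℂ)
    (htr : ∀ A, (Φ A).trace = A.trace)
    (hpos : ∀ A : Matrix (Fin n) (Fin n) ℂ, A.PosSemidef → (Φ A).PosSemidef)
    (hbij : Set.BijOn Φ {ρ | IsPureState ρ} {ρ | IsPureState ρ}) :
    ∀ ρ : Matrix (Fin n) (Fin n) ℂ, IsDensityState ρ → (Φ ρ).rank = ρ.rank := by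
  classical
  intro ρ hρ
  have hρH : ρ.IsHermitian := hρ.1.1
  obtain ⟨lam, P, hP, hdec, hrank⟩ := aux_herm_decomp hρH
  -- upper bound
  have hup : (Φ ρ).rank ≤ ρ.rank := by
    have hΦρ : Φ ρ = ∑ i, lam i • Φ (P i) := by
      rw [hdec, map_sum]
      exact Finset.sum_congr rfl fun i _ => map_smul Φ _ _
    rw [hΦρ, hrank]
    apply aux_rank_sum_smul_le
    intro i
    exact le_of_eq (aux_pure_rank (hbij.mapsTo (hP i)))
  -- Φ ρ is a density state
  have hΦρH : (Φ ρ).IsHermitian := (hpos ρ hρ.1).1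
  obtain ⟨mu, Q, hQ, hdec2, hrank2⟩ := aux_herm_decomp hΦρH
  choose Pp hPp hΦPp using fun j => hbij.surjOn (hQ j)
  set V : Submodule ℝ (Matrix (Fin n) (Fin n) ℂ) :=
    Submodule.span ℝ {ρ | IsPureState ρ} with hV
  have hmaps : ∀ x ∈ V, Φ x ∈ V := by
    intro x hx
    refine Submodule.span_induction (fun y hy => ?_) ?_ (fun a b _ _ ha hb => ?_)
      (fun c a _ ha => ?_) hx
    · exact Submodule.subset_span (hbij.mapsTo hy)
    · rw [map_zero]; exact V.zero_mem
    · rw [map_add]; exact V.add_mem ha hb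
    · rw [map_smul]; exact V.smul_mem c ha
  let f : V →ₗ[ℝ] V := (Φ.domRestrict V).codRestrict V (fun x => hmaps x x.2)
  have hsurj' : ∀ x ∈ V, ∃ w ∈ V, Φ w = x := by
    intro x hx
    refine Submodule.span_induction (fun y hy => ?_) ?_ (fun a b _ _ ha hb => ?_)
      (fun c a _ ha => ?_) hx
    · obtain ⟨w, hw, hwy⟩ := hbij.surjOn hy
      exact ⟨w, Submodule.subset_span hw, hwy⟩
    · exact ⟨0, V.zero_mem, map_zero Φ⟩
    · obtain ⟨w1, hw1, hw1e⟩ := ha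
      obtain ⟨w2, hw2, hw2e⟩ := hb
      exact ⟨w1 + w2, V.add_mem hw1 hw2, by rw [map_add, hw1e, hw2e]⟩
    · obtain ⟨w1, hw1, hw1e⟩ := ha
      exact ⟨c • w1, V.smul_mem c hw1, by rw [map_smul, hw1e]⟩
  have hsurj : Function.Surjective f := by
    rintro ⟨x, hx⟩
    obtain ⟨w, hw, hwe⟩ := hsurj' x hx
    exact ⟨⟨w, hw⟩, Subtype.ext hwe⟩
  have hinj : Function.Injective f :=
    (LinearMap.injective_iff_surjective).mpr hsurj
  set σ : Matrix (Fin n) (Fin n) ℂ := ∑ j, mu j • Pp j with hσ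
  have hσV : σ ∈ V :=
    Submodule.sum_mem _ fun j _ => V.smul_mem _ (Submodule.subset_span (hPp j))
  have hρV : ρ ∈ V := by
    rw [hdec]
    exact Submodule.sum_mem _ fun i _ => V.smul_mem _ (Submodule.subset_span (hP i))
  have hΦσ : Φ σ = Φ ρ := by
    rw [hσ, map_sum]
    calc ∑ j, Φ (mu j • Pp j) = ∑ j, mu j • Q j := by
          refine Finset.sum_congr rfl fun j _ => ?_
          rw [map_smul, hΦPp j]
      _ = Φ ρ := hdec2.symm
  have hσρ : σ = ρ := by
    have hf : f ⟨σ, hσV⟩ = f ⟨ρ, hρV⟩ := Subtype.ext hΦσ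
    exact congrArg Subtype.val (hinj hf)
  have hlo : ρ.rank ≤ (Φ ρ).rank := by
    rw [hrank2, ← hσρ, hσ]
    apply aux_rank_sum_smul_le
    intro j
    exact le_of_eq (aux_pure_rank (hPp j))
  omega
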